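/- Pumping lemma for regular monoidal languages: if L is a regular monoidal language, then for every k ≥ 1 there exists n such that any s ∈ L admitting a factorization s = s₀ ⨾ s₁ ⨾ ... ⨾ s_m into m ≥ n non-identity morphisms with all intermediate boundary widths between 1 and k, has indices i < j with equal boundary widths such that, writing s' = s₀⨾...⨾s_i, s'' = s_{i+1}⨾...⨾s_j, s''' = s_{j+1}⨾...⨾s_m, the morphism s' ⨾ (s'')^a ⨾ s''' is in L for all a ≥ 0. -/

import Mathlib

/-! String diagrams over a single-sorted polygraph: a generator set `G` with
arity and coarity functions. Morphisms of the free strict monoidal category are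
terms built from identities, generators, composition and tensor. -/

inductive Diag (G : Type) (ar co : G → ℕ) : ℕ → ℕ → Type
  | id (n : ℕ) : Diag G ar co n n
  | gen (g : G) : Diag G ar co (ar g) (co g)
  | comp {n m k : ℕ} : Diag G ar co n m → Diag G ar co m k → Diag G ar co n k
  | tensor {n m n' m' : ℕ} : Diag G ar co n m → Diag G ar co n' m' → Diag G ar co (n + n') (m + m')

def Diag.cast {G : Type} {ar co : G → ℕ} {n m n' m' : ℕ} (h1 : n = n') (h2 : m = m')
    (d : Diag G ar co n m) : Diag G ar co n' m' := by subst h1; subst h2; exact d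

/-- A non-deterministic monoidal automaton over the single-sorted polygraph `(G, ar, co)`:
a finite set of states `Q`, for each generator `γ : n → m` a transition relation
`Qⁿ → 𝒫(Qᵐ)` (encoded as a set of pairs of state words of the appropriate lengths),
and initial and final state words. -/
structure NDMA (G : Type) (ar co : G → ℕ) where
  Q : Type
  finQ : Finite Q
  δ : G → Set (List Q × List Q)
  δ_len : ∀ g p, p ∈ δ g → p.1.length = ar g ∧ p.2.length = co g
  init : List Q
  final : List Q

/-- The inductive extension of the transitions of an automaton to all string diagrams:
`Run A s q q'` holds iff `q' ∈ δ̂(q, s)`. -/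
inductive NDMA.Run {G : Type} {ar co : G → ℕ} (A : NDMA G ar co) :
    ∀ {n m : ℕ}, Diag G ar co n m → List A.Q → List A.Q → Prop
  | id {n : ℕ} {q : List A.Q} (h : q.length = n) : A.Run (.id n) q q
  | gen {g : G} {q q' : List A.Q} (h : (q, q') ∈ A.δ g) : A.Run (.gen g) q q'
  | comp {n m k} {s : Diag G ar co n m} {t : Diag G ar co m k} {q r p : List A.Q} :
      A.Run s q r → A.Run t r p → A.Run (s.comp t) q p
  | tensor {n m n' m'} {s : Diag G ar co n m} {t : Diag G ar co n' m'}
      {q r q' r' : List A.Q} :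
      A.Run s q r → A.Run t q' r' → A.Run (s.tensor t) (q ++ q') (r ++ r')

/-- The language of a non-deterministic monoidal automaton. -/
def NDMA.language {G : Type} {ar co : G → ℕ} (A : NDMA G ar co) :
    Set ((n : ℕ) × (m : ℕ) × Diag G ar co n m) :=
  {s | A.Run s.2.2 A.init A.final}

/-- A multi-sorted polygraph. -/
structure Polygraph where
  S : Type
  Gen : List S → List S → Type

/-- String diagrams (morphisms of the free strict monoidal category) over a polygraph. -/
inductive MDiag (P : Polygraph) : List P.S → List P.S → Type
  | id (X : List P.S) : MDiag P X X
  | gen {A B : List P.S} (f : P.Gen A B) : MDiag P A B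
  | comp {A B C : List P.S} : MDiag P A B → MDiag P B C → MDiag P A C
  | tensor {A B A' B' : List P.S} : MDiag P A B → MDiag P A' B' → MDiag P (A ++ A') (B ++ B')

/-- A regular monoidal grammar over the single-sorted polygraph `(G, ar, co)`:
a morphism of finite polygraphs from a polygraph of states into `(G, ar, co)`,
together with initial and final sorts. -/
structure RegGrammar (G : Type) (ar co : G → ℕ) where
  Q : Type
  finQ : Finite Q
  Gen : List Q → List Q → Type
  finGen : Finite ((a : List Q) × (b : List Q) × Gen a b)
  label : ∀ {a b : List Q}, Gen a b → G
  label_ar : ∀ {a b : List Q} (e : Gen a b), ar (label e) = a.length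
  label_co : ∀ {a b : List Q} (e : Gen a b), co (label e) = b.length
  init : List Q
  final : List Q

/-- The free monoidal functor induced by a regular monoidal grammar, relabelling
diagrams over the state polygraph to diagrams over `(G, ar, co)`. -/
def RegGrammar.relabel {G : Type} {ar co : G → ℕ} (R : RegGrammar G ar co) :
    ∀ {a b : List R.Q}, MDiag ⟨R.Q, R.Gen⟩ a b → Diag G ar co a.length b.length
  | _, _, .id X => .id X.length
  | _, _, .gen e => (Diag.gen (R.label e)).cast (R.label_ar e) (R.label_co e)
  | _, _, .comp s t => (R.relabel s).comp (R.relabel t)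
  | _, _, .tensor s t =>
      ((R.relabel s).tensor (R.relabel t)).cast
        List.length_append.symm List.length_append.symm

/-- The language of a regular monoidal grammar: the image of the hom-set from the
initial to the final sorts under the free monoidal functor. -/
def RegGrammar.language {G : Type} {ar co : G → ℕ} (R : RegGrammar G ar co) :
    Set ((n : ℕ) × (m : ℕ) × Diag G ar co n m) :=
  {s | ∃ d : MDiag ⟨R.Q, R.Gen⟩ R.init R.final,
    s = ⟨R.init.length, R.final.length, R.relabel d⟩}

/-- A factorization of a morphism into a chain of composable diagrams. -/
inductive Chain (G : Type) (ar co : G → ℕ) : ℕ → ℕ → Type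
  | nil (n : ℕ) : Chain G ar co n n
  | cons {n m k : ℕ} : Diag G ar co n m → Chain G ar co m k → Chain G ar co n k

namespace Chain
variable {G : Type} {ar co : G → ℕ}

/-- The composite morphism of a chain. -/
def comp : ∀ {n m : ℕ}, Chain G ar co n m → Diag G ar co n m
  | _, _, .nil n => .id n
  | _, _, .cons s c => s.comp c.comp

/-- The number of factors of a chain. -/
def length : ∀ {n m : ℕ}, Chain G ar co n m → ℕ
  | _, _, .nil _ => 0
  | _, _, .cons _ c => c.length + 1

/-- Concatenation of chains. -/
def append : ∀ {n m k : ℕ}, Chain G ar co n m → Chain G ar co m k → Chain G ar co n k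
  | _, _, _, .nil _, c => c
  | _, _, _, .cons s c, c' => .cons s (c.append c')

/-- All boundary widths `k_i` occurring in the chain (including its endpoints)
lie between `1` and `k`. -/
def WidthsLe (k : ℕ) : ∀ {n m : ℕ}, Chain G ar co n m → Prop
  | n, _, .nil _ => 1 ≤ n ∧ n ≤ k
  | n, _, .cons _ c => (1 ≤ n ∧ n ≤ k) ∧ c.WidthsLe k

end Chain

/-- Identity morphisms (diagrams equal to an identity for structural reasons). -/
inductive Diag.IsId {G : Type} {ar co : G → ℕ} : ∀ {n m : ℕ}, Diag G ar co n m → Prop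
  | id (n : ℕ) : Diag.IsId (.id n)
  | comp {n : ℕ} {s t : Diag G ar co n n} : s.IsId → t.IsId → (s.comp t).IsId
  | tensor {n m : ℕ} {s : Diag G ar co n n} {t : Diag G ar co m m} :
      s.IsId → t.IsId → (s.tensor t).IsId

/-- All factors of the chain are non-identity morphisms. -/
def Chain.AllNonId {G : Type} {ar co : G → ℕ} : ∀ {n m : ℕ}, Chain G ar co n m → Prop
  | _, _, .nil _ => True
  | _, _, .cons s c => ¬ s.IsId ∧ c.AllNonId

/-- Iterated composition `s^a` of an endomorphism diagram. -/
def Diag.pow {G : Type} {ar co : G → ℕ} {n : ℕ} (s : Diag G ar co n n) : ℕ → Diag G ar co n n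
  | 0 => .id n
  | a + 1 => s.comp (s.pow a)


section Aux
variable {G : Type} {ar co : G → ℕ} {A : NDMA G ar co}

theorem run_len : ∀ {n m : ℕ} {s : Diag G ar co n m} {q p : List A.Q},
    A.Run s q p → q.length = n ∧ p.length = m := by
  intro n m s q p h
  induction h with
  | id h => exact ⟨h, h⟩
  | gen h => exact A.δ_len _ _ h
  | comp _ _ ih1 ih2 => exact ⟨ih1.1, ih2.2⟩
  | tensor _ _ ih1 ih2 =>
      refine ⟨?_, ?_⟩ <;> simp [List.length_append, ih1.1, ih1.2, ih2.1, ih2.2]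

/-- A purely syntactic identity test, used to invert runs of identity diagrams
without dependent elimination trouble. -/
def isId? : ∀ {n m : ℕ}, Diag G ar co n m → Bool
  | _, _, .id _ => true
  | _, _, .gen _ => false
  | _, _, .comp s t => isId? s && isId? t
  | _, _, .tensor s t => isId? s && isId? t

theorem run_isId : ∀ {n m : ℕ} {s : Diag G ar co n m} {q p : List A.Q},
    A.Run s q p → isId? s = true → q = p := by
  intro n m s q p h
  induction h with
  | id _ => intro _; rfl
  | gen _ => intro hb; simp [isId?] at hb
  | comp _ _ ih1 ih2 =>
      intro hb
      rw [isId?, Bool.and_eq_true] at hb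
      exact (ih1 hb.1).trans (ih2 hb.2)
  | tensor _ _ ih1 ih2 =>
      intro hb
      rw [isId?, Bool.and_eq_true] at hb
      rw [ih1 hb.1, ih2 hb.2]

theorem run_id_inv {n : ℕ} {q p : List A.Q} (h : A.Run (.id n) q p) : q = p :=
  run_isId h rfl

theorem run_comp_inv {n m k : ℕ} {s : Diag G ar co n m} {t : Diag G ar co m k}
    {q p : List A.Q} (h : A.Run (s.comp t) q p) :
    ∃ r, A.Run s q r ∧ A.Run t r p := by
  cases h with
  | comp h1 h2 => exact ⟨_, h1, h2⟩

/-- A run along a chain, recording all intermediate state words. -/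
inductive RCW (A : NDMA G ar co) :
    ∀ {n m : ℕ}, Chain G ar co n m → List A.Q → List (List A.Q) → List A.Q → Prop
  | nil {n : ℕ} {q : List A.Q} (h : q.length = n) : RCW A (.nil n) q [] q
  | cons {n m k : ℕ} {s : Diag G ar co n m} {c : Chain G ar co m k}
      {q r p : List A.Q} {ws : List (List A.Q)} :
      A.Run s q r → RCW A c r ws p → RCW A (.cons s c) q (r :: ws) p

theorem rcw_of_run : ∀ {n m : ℕ} (c : Chain G ar co n m) (q p : List A.Q),
    A.Run c.comp q p → ∃ ws, RCW A c q ws p := by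
  intro n m c
  induction c with
  | nil n => intro q p h; cases run_id_inv h; exact ⟨[], .nil (run_len h).1⟩
  | cons s c ih =>
      intro q p h
      obtain ⟨r, h1, h2⟩ := run_comp_inv h
      obtain ⟨ws, hws⟩ := ih r p h2
      exact ⟨r :: ws, .cons h1 hws⟩

theorem rcw_length : ∀ {n m : ℕ} {c : Chain G ar co n m} {q p : List A.Q}
    {ws : List (List A.Q)}, RCW A c q ws p → ws.length = c.length := by
  intro n m c q p ws h
  induction h with
  | nil _ => rfl
  | cons _ _ ih => simp [Chain.length, ih]

theorem widths_src {k : ℕ} : ∀ {n m : ℕ} (c : Chain G ar co n m), c.WidthsLe k → n ≤ k := by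
  intro n m c h
  cases c with
  | nil => exact h.2
  | cons s c => exact h.1.2

theorem rcw_widths {k : ℕ} : ∀ {n m : ℕ} {c : Chain G ar co n m} {q p : List A.Q}
    {ws : List (List A.Q)}, RCW A c q ws p → c.WidthsLe k →
    ∀ w ∈ ws, w.length ≤ k := by
  intro n m c q p ws h
  induction h with
  | nil _ => intro _ w hw; cases hw
  | @cons n m k' s c q r p ws hr hc ih =>
      intro hw w hmem
      rw [List.mem_cons] at hmem
      rcases hmem with rfl | hmem
      · exact (run_len hr).2 ▸ widths_src c hw.2
      · exact ih hw.2 w hmem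

theorem rcw_run : ∀ {n m : ℕ} {c : Chain G ar co n m} {q p : List A.Q}
    {ws : List (List A.Q)}, RCW A c q ws p → A.Run c.comp q p := by
  intro n m c q p ws h
  induction h with
  | nil h => exact .id h
  | cons hr _ ih => exact .comp hr ih

theorem rcw_split : ∀ (ws₁ : List (List A.Q)) {n m : ℕ} (c : Chain G ar co n m)
    (q r p : List A.Q) (ws₂ : List (List A.Q)),
    RCW A c q (ws₁ ++ r :: ws₂) p →
    ∃ (ℓ : ℕ) (c₁ : Chain G ar co n ℓ) (c₂ : Chain G ar co ℓ m),
      c = c₁.append c₂ ∧ c₁.length = ws₁.length + 1 ∧ r.length = ℓ ∧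
      RCW A c₁ q (ws₁ ++ [r]) r ∧ RCW A c₂ r ws₂ p := by
  intro ws₁
  induction ws₁ with
  | nil =>
      intro n m c q r p ws₂ h
      cases h with
      | @cons n m' k' s c q r p ws hr hc =>
          exact ⟨m', .cons s (.nil m'), c, rfl, rfl, (run_len hr).2,
            .cons hr (.nil (run_len hr).2), hc⟩
  | cons w ws₁ ih =>
      intro n m c q r p ws₂ h
      cases h with
      | @cons n m' k' s c q w p ws hr hc =>
          obtain ⟨ℓ, c₁, c₂, hsplit, hlen, hrl, h1, h2⟩ := ih c w r p ws₂ hc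
          exact ⟨ℓ, .cons s c₁, c₂, by rw [hsplit]; rfl,
            by simp [Chain.length, hlen], hrl, .cons hr h1, h2⟩

theorem run_pow {ℓ : ℕ} {s : Diag G ar co ℓ ℓ} {r : List A.Q}
    (hlen : r.length = ℓ) (h : A.Run s r r) : ∀ a, A.Run (s.pow a) r r
  | 0 => .id hlen
  | a + 1 => .comp h (run_pow hlen h a)

end Aux

theorem exists_dup {α : Type*} : ∀ (l : List α), ¬ l.Nodup →
    ∃ (l₁ : List α) (a : α) (l₂ l₃ : List α), l = l₁ ++ a :: (l₂ ++ a :: l₃) := by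
  intro l
  induction l with
  | nil => intro h; exact absurd List.nodup_nil h
  | cons a t ih =>
      intro h
      rw [List.nodup_cons] at h
      by_cases hmem : a ∈ t
      · obtain ⟨s, u, rfl⟩ := List.append_of_mem hmem
        exact ⟨[], a, s, u, rfl⟩
      · obtain ⟨l₁, b, l₂, l₃, rfl⟩ := ih (fun hn => h ⟨hmem, hn⟩)
        exact ⟨a :: l₁, b, l₂, l₃, rfl⟩



/-- Pumping lemma for regular monoidal languages. -/
theorem pumping_lemma (G : Type) (ar co : G → ℕ) [Finite G]
    (L : Set ((n : ℕ) × (m : ℕ) × Diag G ar co n m))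
    (hreg : ∃ A : NDMA G ar co, L = A.language) :
    ∀ k : ℕ, 1 ≤ k → ∃ N : ℕ, ∀ {n m : ℕ} (c : Chain G ar co n m),
      (⟨n, m, c.comp⟩ : (n : ℕ) × (m : ℕ) × Diag G ar co n m) ∈ L →
      N ≤ c.length → c.AllNonId → c.WidthsLe k →
      ∃ (ℓ : ℕ) (c₁ : Chain G ar co n ℓ) (c₂ : Chain G ar co ℓ ℓ) (c₃ : Chain G ar co ℓ m),
        c = c₁.append (c₂.append c₃) ∧ 1 ≤ c₁.length ∧ 1 ≤ c₂.length ∧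
        ∀ a : ℕ,
          (⟨n, m, c₁.comp.comp ((c₂.comp.pow a).comp c₃.comp)⟩ :
            (n : ℕ) × (m : ℕ) × Diag G ar co n m) ∈ L := by
  obtain ⟨A, rfl⟩ := hreg
  intro k _
  classical
  haveI : Finite A.Q := A.finQ
  set S : Finset (List A.Q) := (List.finite_length_le A.Q k).toFinset with hS
  refine ⟨S.card + 1, ?_⟩
  intro n m c hc hlen _ hw
  have hrun : A.Run c.comp A.init A.final := hc
  obtain ⟨ws, hws⟩ := rcw_of_run c A.init A.final hrun
  have hwslen : S.card + 1 ≤ ws.length := by rw [rcw_length hws]; exact hlen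
  have hsub : ws.toFinset ⊆ S := by
    intro w hwmem
    rw [List.mem_toFinset] at hwmem
    rw [hS, Set.Finite.mem_toFinset]
    exact rcw_widths hws hw w hwmem
  have hnd : ¬ ws.Nodup := by
    intro hnd
    have := Finset.card_le_card hsub
    rw [List.toFinset_card_of_nodup hnd] at this
    omega
  obtain ⟨ws₁, r, ws₂, ws₃, rfl⟩ := exists_dup ws hnd
  obtain ⟨ℓ, c₁, c₂₃, rfl, hl1, hrl, h1, h23⟩ :=
    rcw_split ws₁ c A.init r A.final (ws₂ ++ r :: ws₃) hws
  obtain ⟨ℓ', c₂, c₃, rfl, hl2, hrl', h2, h3⟩ :=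
    rcw_split ws₂ c₂₃ r r A.final ws₃ h23
  obtain rfl : ℓ = ℓ' := hrl.symm.trans hrl'
  refine ⟨ℓ, c₁, c₂, c₃, rfl, by omega, by omega, ?_⟩
  intro a
  exact NDMA.Run.comp (rcw_run h1)
    (NDMA.Run.comp (run_pow hrl (rcw_run h2) a) (rcw_run h3))
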